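/- For every positive integer n, the domination polynomial of the Cartesian product K_n □ K_2 is D(K_n □ K_2, x) = ((1+x)^n − 1)^2 + 2x^n. -/

import Mathlib

open Polynomial

/-- `S` is a dominating set of the graph `G`: every vertex not in `S` has a neighbor in `S`. -/
def SimpleGraph.IsDomSet {V : Type*} (G : SimpleGraph V) (S : Finset V) : Prop :=
  ∀ v : V, v ∈ S ∨ ∃ u ∈ S, G.Adj u v

open Classical in
/-- The domination polynomial of a finite graph `G`:
`D(G,x) = ∑ d(G,i) xⁱ` where `d(G,i)` is the number of dominating sets of size `i`. -/
noncomputable def domPoly {V : Type*} [Fintype V] (G : SimpleGraph V) : Polynomial ℂ :=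
  ∑ S ∈ Finset.univ.filter (fun S : Finset V => G.IsDomSet S), X ^ S.card

open Finset
namespace DomAux

variable {n : ℕ}

def glue (p : Finset (Fin n) × Finset (Fin n)) : Finset (Fin n × Fin 2) :=
  p.1.map ⟨fun a => (a, 0), fun a b h => by simpa using h⟩ ∪
  p.2.map ⟨fun a => (a, 1), fun a b h => by simpa using h⟩

lemma mem_glue (p : Finset (Fin n) × Finset (Fin n)) (v : Fin n × Fin 2) :
    v ∈ glue p ↔ (v.2 = 0 ∧ v.1 ∈ p.1) ∨ (v.2 = 1 ∧ v.1 ∈ p.2) := by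
  obtain ⟨i, c⟩ := v
  simp only [glue, Finset.mem_union, Finset.mem_map, Function.Embedding.coeFn_mk,
    Prod.mk.injEq]
  constructor
  · rintro (⟨a, ha, rfl, rfl⟩ | ⟨a, ha, rfl, rfl⟩)
    · exact Or.inl ⟨rfl, ha⟩
    · exact Or.inr ⟨rfl, ha⟩
  · rintro (⟨rfl, hi⟩ | ⟨rfl, hi⟩)
    · exact Or.inl ⟨i, hi, rfl⟩
    · exact Or.inr ⟨i, hi, rfl⟩

lemma card_glue (p : Finset (Fin n) × Finset (Fin n)) :
    (glue p).card = p.1.card + p.2.card := by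
  rw [glue, Finset.card_union_of_disjoint, Finset.card_map, Finset.card_map]
  simp only [Finset.disjoint_left, Finset.mem_map, Function.Embedding.coeFn_mk]
  rintro v ⟨a, ha, rfl⟩ ⟨b, hb, h⟩
  exact absurd (congrArg Prod.snd h) (show (1 : Fin 2) ≠ 0 by decide)

noncomputable def split (S : Finset (Fin n × Fin 2)) :
    Finset (Fin n) × Finset (Fin n) :=
  ((S.filter (fun v => v.2 = 0)).image Prod.fst,
   (S.filter (fun v => v.2 = 1)).image Prod.fst)

lemma split_glue (p : Finset (Fin n) × Finset (Fin n)) : split (glue p) = p := by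
  obtain ⟨A, B⟩ := p
  refine Prod.ext ?_ ?_
  · ext i
    simp only [split, Finset.mem_image, Finset.mem_filter, mem_glue]
    constructor
    · rintro ⟨v, ⟨hm, hv2⟩, hv1⟩
      rcases hm with ⟨-, h⟩ | ⟨h1, h⟩
      · exact hv1 ▸ h
      · rw [hv2] at h1; exact absurd h1 (by decide)
    · intro hi; exact ⟨(i, 0), ⟨Or.inl ⟨rfl, hi⟩, rfl⟩, rfl⟩
  · ext i
    simp only [split, Finset.mem_image, Finset.mem_filter, mem_glue]
    constructor
    · rintro ⟨v, ⟨hm, hv2⟩, hv1⟩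
      rcases hm with ⟨h1, h⟩ | ⟨-, h⟩
      · rw [hv2] at h1; exact absurd h1 (by decide)
      · exact hv1 ▸ h
    · intro hi; exact ⟨(i, 1), ⟨Or.inr ⟨rfl, hi⟩, rfl⟩, rfl⟩

lemma glue_split (S : Finset (Fin n × Fin 2)) : glue (split S) = S := by
  ext ⟨i, c⟩
  rw [mem_glue]
  simp only [split, Finset.mem_image, Finset.mem_filter]
  constructor
  · rintro (⟨rfl, ⟨v, ⟨hv, hv2⟩, hv1⟩⟩ | ⟨rfl, ⟨v, ⟨hv, hv2⟩, hv1⟩⟩)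
    · rwa [show v = (i, 0) from by rw [← hv1, ← hv2]] at hv
    · rwa [show v = (i, 1) from by rw [← hv1, ← hv2]] at hv
  · intro h
    have hc : c = 0 ∨ c = 1 := by omega
    rcases hc with rfl | rfl
    · exact Or.inl ⟨rfl, ⟨(i, 0), ⟨h, rfl⟩, rfl⟩⟩
    · exact Or.inr ⟨rfl, ⟨(i, 1), ⟨h, rfl⟩, rfl⟩⟩

def Cond (p : Finset (Fin n) × Finset (Fin n)) : Prop :=
  (p.1.Nonempty ∧ p.2.Nonempty) ∨ p = (Finset.univ, ∅) ∨ p = (∅, Finset.univ)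

lemma isDomSet_glue_iff (hn : 1 ≤ n) (p : Finset (Fin n) × Finset (Fin n)) :
    ((⊤ : SimpleGraph (Fin n)).boxProd (⊤ : SimpleGraph (Fin 2))).IsDomSet (glue p)
      ↔ Cond p := by
  obtain ⟨A, B⟩ := p
  have i0 : Fin n := ⟨0, hn⟩
  constructor
  · intro h
    rcases A.eq_empty_or_nonempty with hA | hA
    · rcases B.eq_empty_or_nonempty with hB | hB
      · exfalso
        rcases h (i0, 0) with hv | ⟨u, hu, -⟩
        · rw [mem_glue] at hv; simp [hA, hB] at hv
        · rw [mem_glue] at hu; simp [hA, hB] at hu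
      · right; right
        have hBu : B = Finset.univ := by
          ext i
          simp only [Finset.mem_univ, iff_true]
          rcases h (i, 0) with hv | ⟨u, hu, hadj⟩
          · rw [mem_glue] at hv; simp [hA] at hv
          · rw [mem_glue] at hu
            rcases hu with ⟨h0, hu1⟩ | ⟨h1, hu1⟩
            · rw [hA] at hu1; exact absurd hu1 (Finset.notMem_empty _)
            · rw [SimpleGraph.boxProd_adj] at hadj
              rcases hadj with ⟨-, h2⟩ | ⟨-, h2⟩
              · simp only [Prod.snd] at h2
                rw [h2] at h1; exact absurd h1 (by decide)
              · rw [h2] at hu1; exact hu1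
        rw [hA, hBu]
    · rcases B.eq_empty_or_nonempty with hB | hB
      · right; left
        have hAu : A = Finset.univ := by
          ext i
          simp only [Finset.mem_univ, iff_true]
          rcases h (i, 1) with hv | ⟨u, hu, hadj⟩
          · rw [mem_glue] at hv; simp [hB] at hv
          · rw [mem_glue] at hu
            rcases hu with ⟨h0, hu1⟩ | ⟨h1, hu1⟩
            · rw [SimpleGraph.boxProd_adj] at hadj
              rcases hadj with ⟨-, h2⟩ | ⟨-, h2⟩
              · simp only [Prod.snd] at h2
                rw [h2] at h0; exact absurd h0 (by decide)
              · rw [h2] at hu1; exact hu1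
            · rw [hB] at hu1; exact absurd hu1 (Finset.notMem_empty _)
        rw [hAu, hB]
      · exact Or.inl ⟨hA, hB⟩
  · rintro (⟨⟨a, ha⟩, ⟨b, hb⟩⟩ | hp | hp)
    · rintro ⟨i, c⟩
      have hc : c = 0 ∨ c = 1 := by omega
      rcases hc with rfl | rfl
      · by_cases hi : i ∈ A
        · exact Or.inl ((mem_glue _ _).2 (Or.inl ⟨rfl, hi⟩))
        · refine Or.inr ⟨(a, 0), (mem_glue _ _).2 (Or.inl ⟨rfl, ha⟩), ?_⟩
          rw [SimpleGraph.boxProd_adj]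
          exact Or.inl ⟨by simp [show a ≠ i from fun h => hi (h ▸ ha)], rfl⟩
      · by_cases hi : i ∈ B
        · exact Or.inl ((mem_glue _ _).2 (Or.inr ⟨rfl, hi⟩))
        · refine Or.inr ⟨(b, 1), (mem_glue _ _).2 (Or.inr ⟨rfl, hb⟩), ?_⟩
          rw [SimpleGraph.boxProd_adj]
          exact Or.inl ⟨by simp [show b ≠ i from fun h => hi (h ▸ hb)], rfl⟩
    · rw [Prod.mk.injEq] at hp
      obtain ⟨rfl, rfl⟩ := hp
      rintro ⟨i, c⟩
      have hc : c = 0 ∨ c = 1 := by omega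
      rcases hc with rfl | rfl
      · exact Or.inl ((mem_glue _ _).2 (Or.inl ⟨rfl, Finset.mem_univ i⟩))
      · refine Or.inr ⟨(i, 0), (mem_glue _ _).2 (Or.inl ⟨rfl, Finset.mem_univ i⟩), ?_⟩
        rw [SimpleGraph.boxProd_adj]
        exact Or.inr ⟨by simp, rfl⟩
    · rw [Prod.mk.injEq] at hp
      obtain ⟨rfl, rfl⟩ := hp
      rintro ⟨i, c⟩
      have hc : c = 0 ∨ c = 1 := by omega
      rcases hc with rfl | rfl
      · refine Or.inr ⟨(i, 1), (mem_glue _ _).2 (Or.inr ⟨rfl, Finset.mem_univ i⟩), ?_⟩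
        rw [SimpleGraph.boxProd_adj]
        exact Or.inr ⟨by simp, rfl⟩
      · exact Or.inl ((mem_glue _ _).2 (Or.inr ⟨rfl, Finset.mem_univ i⟩))

lemma sum_all (n : ℕ) :
    ∑ A : Finset (Fin n), (X : ℂ[X]) ^ A.card = (1 + X) ^ n := by
  classical
  have h := Finset.prod_add (fun _ : Fin n => (X : ℂ[X])) (fun _ => 1) Finset.univ
  simp [Finset.prod_const, Finset.powerset_univ, add_comm] at h
  rw [← h]

lemma sum_nonempty (n : ℕ) :
    ∑ A ∈ Finset.univ.filter (fun A : Finset (Fin n) => A.Nonempty),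
      (X : ℂ[X]) ^ A.card = (1 + X) ^ n - 1 := by
  classical
  have key : Finset.univ.filter (fun A : Finset (Fin n) => A.Nonempty)
      = Finset.univ.erase ∅ := by
    ext A; simp [Finset.nonempty_iff_ne_empty]
  rw [key, eq_sub_iff_add_eq, ← sum_all n,
    ← Finset.sum_erase_add Finset.univ _ (Finset.mem_univ (∅ : Finset (Fin n)))]
  simp

end DomAux

/-- For every `n ≥ 1`, the domination polynomial of the Cartesian (box) product
`Kₙ □ K₂` is `D(Kₙ □ K₂, x) = ((1+x)ⁿ − 1)² + 2xⁿ`. -/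
theorem domPoly_completeBoxProdK2 (n : ℕ) (hn : 1 ≤ n) :
    domPoly ((⊤ : SimpleGraph (Fin n)).boxProd (⊤ : SimpleGraph (Fin 2))) =
      ((1 + X) ^ n - 1) ^ 2 + 2 * X ^ n := by
  classical
  have huniv : (Finset.univ : Finset (Fin n)).Nonempty := ⟨⟨0, hn⟩, Finset.mem_univ _⟩
  have hbij : domPoly ((⊤ : SimpleGraph (Fin n)).boxProd (⊤ : SimpleGraph (Fin 2)))
      = ∑ p ∈ Finset.univ.filter (DomAux.Cond (n := n)),
          (X : ℂ[X]) ^ (p.1.card + p.2.card) := by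
    rw [domPoly]
    refine Finset.sum_nbij' (i := DomAux.split) (j := DomAux.glue) ?_ ?_ ?_ ?_ ?_
    · intro S hS
      simp only [Finset.mem_filter, Finset.mem_univ, true_and] at hS ⊢
      rw [← DomAux.isDomSet_glue_iff hn, DomAux.glue_split]; exact hS
    · intro p hp
      simp only [Finset.mem_filter, Finset.mem_univ, true_and] at hp ⊢
      rw [DomAux.isDomSet_glue_iff hn]; exact hp
    · exact fun S _ => DomAux.glue_split S
    · exact fun p _ => DomAux.split_glue p
    · intro S _
      conv_lhs => rw [← DomAux.glue_split S]
      rw [DomAux.card_glue]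
  rw [hbij]
  have hsplit : (Finset.univ.filter (DomAux.Cond (n := n)))
      = insert (Finset.univ, (∅ : Finset (Fin n)))
        (insert ((∅ : Finset (Fin n)), Finset.univ)
          (Finset.univ.filter (fun p : Finset (Fin n) × Finset (Fin n) =>
            p.1.Nonempty ∧ p.2.Nonempty))) := by
    ext ⟨A, B⟩
    simp only [Finset.mem_filter, Finset.mem_univ, true_and, Finset.mem_insert,
      DomAux.Cond, Prod.mk.injEq]
    tauto
  rw [hsplit]
  rw [Finset.sum_insert (by
      simp only [Finset.mem_insert, Finset.mem_filter, Finset.mem_univ, true_and,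
        Prod.mk.injEq]
      rintro (⟨h, -⟩ | ⟨-, h⟩)
      · exact huniv.ne_empty h
      · exact absurd h (by simp)),
    Finset.sum_insert (by
      simp only [Finset.mem_filter, Finset.mem_univ, true_and]
      rintro ⟨h, -⟩
      exact absurd h (by simp))]
  have hprod : ∑ p ∈ Finset.univ.filter (fun p : Finset (Fin n) × Finset (Fin n) =>
      p.1.Nonempty ∧ p.2.Nonempty), (X : ℂ[X]) ^ (p.1.card + p.2.card)
      = ((1 + X) ^ n - 1) ^ 2 := by
    have huu : (Finset.univ : Finset (Finset (Fin n) × Finset (Fin n)))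
        = Finset.univ ×ˢ Finset.univ := by simp
    rw [huu, Finset.filter_product, Finset.sum_product]
    simp_rw [pow_add]
    rw [← Finset.sum_mul_sum, DomAux.sum_nonempty, sq]
  rw [hprod]
  simp [Finset.card_univ]
  ring
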